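/- arXiv:2204.05123 — 6 statements merged into one kernel-verified Lean document; each statement's English description precedes it below -/
import Mathlib

section
/- There is no binary operation f : Fin 3 → Fin 3 → Fin 3 satisfying f (f (f b c) a) (f b (f (f b a) b)) = a for all a, b, c : Fin 3; that is, the single Sheffer-stroke axiom for Boolean algebra has no models of size 3. -/
def good (n : Nat) : Bool :=
  let o := fun x y => n / 3^(3*x+y) % 3
  [0,1,2].all fun a => [0,1,2].all fun b => [0,1,2].all fun c =>
    o (o (o b c) a) (o b (o (o b a) b)) == a

def chunk (lo : Nat) : Nat → Bool
  | 0 => true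
  | k+1 => !(good (lo + k)) && chunk lo k

def allb : Nat → Bool
  | 0 => true
  | b+1 => chunk (243 * b) 243 && allb b

set_option maxRecDepth 10000 in
set_option maxHeartbeats 4000000 in
theorem nogood : allb 81 = true := by decide

theorem chunk_spec : ∀ k lo, chunk lo k = true → ∀ i < k, good (lo + i) = false := by
  intro k
  induction k with
  | zero => intro lo h i hi; omega
  | succ m ih =>
    intro lo h i hi
    simp only [chunk, Bool.and_eq_true, Bool.not_eq_true'] at h
    rcases Nat.lt_succ_iff_lt_or_eq.mp hi with h' | h'
    · exact ih lo h.2 i h'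
    · subst h'; exact h.1

theorem allb_spec : ∀ b, allb b = true → ∀ n < 243 * b, good n = false := by
  intro b
  induction b with
  | zero => intro h n hn; omega
  | succ m ih =>
    intro h n hn
    simp only [allb, Bool.and_eq_true] at h
    by_cases hc : n < 243 * m
    · exact ih h.2 n hc
    · have := chunk_spec 243 (243 * m) h.1 (n - 243 * m) (by omega)
      rwa [Nat.add_sub_cancel' (by omega)] at this

set_option maxHeartbeats 1000000 in
theorem stmt_5 :
    ¬ ∃ f : Fin 3 → Fin 3 → Fin 3,
      ∀ a b c : Fin 3, f (f (f b c) a) (f b (f (f b a) b)) = a := by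
  rintro ⟨f, H⟩
  obtain ⟨n, hn⟩ : ∃ m : Nat, m = (f 0 0).val + 3 * ((f 0 1).val + 3 * ((f 0 2).val + 3 * ((f 1 0).val + 3 * ((f 1 1).val + 3 * ((f 1 2).val + 3 * ((f 2 0).val + 3 * ((f 2 1).val + 3 * ((f 2 2).val)))))))) := ⟨_, rfl⟩
  have h0 := (f 0 0).is_lt; have h1 := (f 0 1).is_lt; have h2 := (f 0 2).is_lt
  have h3 := (f 1 0).is_lt; have h4 := (f 1 1).is_lt; have h5 := (f 1 2).is_lt
  have h6 := (f 2 0).is_lt; have h7 := (f 2 1).is_lt; have h8 := (f 2 2).is_lt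
  have hlt : n < 19683 := by omega
  have key : ∀ x y : Fin 3, n / 3 ^ (3 * x.val + y.val) % 3 = (f x y).val := by
    have q0 : n / 3 ^ 0 = (f 0 0).val + 3 * ((f 0 1).val + 3 * ((f 0 2).val + 3 * ((f 1 0).val + 3 * ((f 1 1).val + 3 * ((f 1 2).val + 3 * ((f 2 0).val + 3 * ((f 2 1).val + 3 * ((f 2 2).val)))))))) := by rw [pow_zero, Nat.div_one, hn]
    have q1 : n / 3 ^ 1 = (f 0 1).val + 3 * ((f 0 2).val + 3 * ((f 1 0).val + 3 * ((f 1 1).val + 3 * ((f 1 2).val + 3 * ((f 2 0).val + 3 * ((f 2 1).val + 3 * ((f 2 2).val))))))) := by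
      rw [pow_succ, ← Nat.div_div_eq_div_mul, q0, Nat.add_mul_div_left _ _ (by norm_num : (0:Nat) < 3), Nat.div_eq_of_lt h0, Nat.zero_add]
    have q2 : n / 3 ^ 2 = (f 0 2).val + 3 * ((f 1 0).val + 3 * ((f 1 1).val + 3 * ((f 1 2).val + 3 * ((f 2 0).val + 3 * ((f 2 1).val + 3 * ((f 2 2).val)))))) := by
      rw [pow_succ, ← Nat.div_div_eq_div_mul, q1, Nat.add_mul_div_left _ _ (by norm_num : (0:Nat) < 3), Nat.div_eq_of_lt h1, Nat.zero_add]
    have q3 : n / 3 ^ 3 = (f 1 0).val + 3 * ((f 1 1).val + 3 * ((f 1 2).val + 3 * ((f 2 0).val + 3 * ((f 2 1).val + 3 * ((f 2 2).val))))) := by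
      rw [pow_succ, ← Nat.div_div_eq_div_mul, q2, Nat.add_mul_div_left _ _ (by norm_num : (0:Nat) < 3), Nat.div_eq_of_lt h2, Nat.zero_add]
    have q4 : n / 3 ^ 4 = (f 1 1).val + 3 * ((f 1 2).val + 3 * ((f 2 0).val + 3 * ((f 2 1).val + 3 * ((f 2 2).val)))) := by
      rw [pow_succ, ← Nat.div_div_eq_div_mul, q3, Nat.add_mul_div_left _ _ (by norm_num : (0:Nat) < 3), Nat.div_eq_of_lt h3, Nat.zero_add]
    have q5 : n / 3 ^ 5 = (f 1 2).val + 3 * ((f 2 0).val + 3 * ((f 2 1).val + 3 * ((f 2 2).val))) := by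
      rw [pow_succ, ← Nat.div_div_eq_div_mul, q4, Nat.add_mul_div_left _ _ (by norm_num : (0:Nat) < 3), Nat.div_eq_of_lt h4, Nat.zero_add]
    have q6 : n / 3 ^ 6 = (f 2 0).val + 3 * ((f 2 1).val + 3 * ((f 2 2).val)) := by
      rw [pow_succ, ← Nat.div_div_eq_div_mul, q5, Nat.add_mul_div_left _ _ (by norm_num : (0:Nat) < 3), Nat.div_eq_of_lt h5, Nat.zero_add]
    have q7 : n / 3 ^ 7 = (f 2 1).val + 3 * ((f 2 2).val) := by
      rw [pow_succ, ← Nat.div_div_eq_div_mul, q6, Nat.add_mul_div_left _ _ (by norm_num : (0:Nat) < 3), Nat.div_eq_of_lt h6, Nat.zero_add]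
    have q8 : n / 3 ^ 8 = (f 2 2).val := by
      rw [pow_succ, ← Nat.div_div_eq_div_mul, q7, Nat.add_mul_div_left _ _ (by norm_num : (0:Nat) < 3), Nat.div_eq_of_lt h7, Nat.zero_add]
    have k00 : n / 3 ^ 0 % 3 = (f 0 0).val := by
      rw [q0, Nat.add_mul_mod_self_left, Nat.mod_eq_of_lt h0]
    have k01 : n / 3 ^ 1 % 3 = (f 0 1).val := by
      rw [q1, Nat.add_mul_mod_self_left, Nat.mod_eq_of_lt h1]
    have k02 : n / 3 ^ 2 % 3 = (f 0 2).val := by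
      rw [q2, Nat.add_mul_mod_self_left, Nat.mod_eq_of_lt h2]
    have k10 : n / 3 ^ 3 % 3 = (f 1 0).val := by
      rw [q3, Nat.add_mul_mod_self_left, Nat.mod_eq_of_lt h3]
    have k11 : n / 3 ^ 4 % 3 = (f 1 1).val := by
      rw [q4, Nat.add_mul_mod_self_left, Nat.mod_eq_of_lt h4]
    have k12 : n / 3 ^ 5 % 3 = (f 1 2).val := by
      rw [q5, Nat.add_mul_mod_self_left, Nat.mod_eq_of_lt h5]
    have k20 : n / 3 ^ 6 % 3 = (f 2 0).val := by
      rw [q6, Nat.add_mul_mod_self_left, Nat.mod_eq_of_lt h6]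
    have k21 : n / 3 ^ 7 % 3 = (f 2 1).val := by
      rw [q7, Nat.add_mul_mod_self_left, Nat.mod_eq_of_lt h7]
    have k22 : n / 3 ^ 8 % 3 = (f 2 2).val := by
      rw [q8, Nat.mod_eq_of_lt h8]
    intro x y
    fin_cases x <;> fin_cases y
    exacts [k00, k01, k02, k10, k11, k12, k20, k21, k22]
  have main : ∀ a b c : Fin 3,
      n / 3 ^ (3 * (n / 3 ^ (3 * (n / 3 ^ (3 * b.val + c.val) % 3) + a.val) % 3) +
        n / 3 ^ (3 * b.val + n / 3 ^ (3 * (n / 3 ^ (3 * b.val + a.val) % 3) + b.val) % 3) % 3) % 3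
        = a.val := by
    intro a b c
    rw [key b c, key (f b c) a, key b a, key (f b a) b, key b (f (f b a) b),
      key (f (f b c) a) (f b (f (f b a) b)), H]
  have main' : ∀ a b c : Nat, a < 3 → b < 3 → c < 3 →
      n / 3 ^ (3 * (n / 3 ^ (3 * (n / 3 ^ (3 * b + c) % 3) + a) % 3) +
        n / 3 ^ (3 * b + n / 3 ^ (3 * (n / 3 ^ (3 * b + a) % 3) + b) % 3) % 3) % 3
        = a :=
    fun a b c ha hb hc => main ⟨a, ha⟩ ⟨b, hb⟩ ⟨c, hc⟩
  have hgood : good n = true := by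
    simp only [good, List.all_eq_true, List.mem_cons, List.not_mem_nil, or_false, beq_iff_eq]
    intro a ha b hb c hc
    exact main' a b c (by rcases ha with rfl | rfl | rfl <;> omega)
      (by rcases hb with rfl | rfl | rfl <;> omega)
      (by rcases hc with rfl | rfl | rfl <;> omega)
  exact Bool.false_ne_true ((allb_spec 81 nogood n (by omega)).symm.trans hgood)
end

section
/- If M is a type with a binary operation ∘ satisfying x ∘ y = (y ∘ x) ∘ y for all x, y in M, then (a ∘ ((b ∘ a) ∘ (a ∘ b))) ∘ a = b ∘ a for all a, b in M. -/
theorem stmt_7 {M : Type*} (f : M → M → M)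
    (h : ∀ x y : M, f x y = f (f y x) y) :
    ∀ a b : M, f (f a (f (f b a) (f a b))) a = f b a := by
  have k : ∀ x y : M, f (f y x) y = f x y := fun x y => (h x y).symm
  intro a b
  calc f (f a (f (f b a) (f a b))) a
      = f (f (f b a) (f a b)) a := k _ _
    _ = f (f (f (f a b) a) (f a b)) a := by rw [h b a]
    _ = f (f a (f a b)) a := congrArg (fun t => f t a) (k a (f a b))
    _ = f (f a b) a := k _ _
    _ = f b a := k b a
end

section
/- If M is a type with a binary operation ∘ satisfying (b ∘ a) ∘ ((c ∘ a) ∘ c) = a for all a, b, c in M, then a ∘ (a ∘ (b ∘ b)) = b ∘ b for all a, b in M. -/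
theorem stmt_13 {M : Type*} (f : M → M → M)
    (h : ∀ a b c : M, f (f b a) (f (f c a) c) = a) :
    ∀ a b : M, f a (f a (f b b)) = f b b := by
  -- Step 1: f (f b a) a = a
  have h2 : ∀ a b : M, f (f b a) a = a := by
    intro a b
    have k := h a b (f (f a a) a)
    rwa [h a (f (f a a) a) a] at k
  -- Step 2: f a (f (f c a) c) = a
  have h4 : ∀ a c : M, f a (f (f c a) c) = a := by
    intro a c
    have k := h a (f a a) c
    rwa [h2 a a] at k
  -- Step 3: f a (f (f c a) c) = f (f c a) c
  have h4' : ∀ a c : M, f a (f (f c a) c) = f (f c a) c := by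
    intro a c
    have k := h2 (f (f c a) c) (f a a)
    rwa [h a a c] at k
  -- Step 4: f (f c a) c = a
  have hE : ∀ a c : M, f (f c a) c = a := by
    intro a c
    exact ((h4 a c).symm.trans (h4' a c)).symm
  -- Step 5: f x a = a
  have hR : ∀ x a : M, f x a = a := by
    intro x a
    have k := h2 a (f a x)
    rwa [hE x a] at k
  intro a b
  rw [hR a (f b b), hR a (f b b)]
end

section
/- If B is a type with binary operations ⊓, ⊔ and a unary operation ᶜ satisfying the six Huntington-style axioms, then the law of double negation holds: (aᶜ)ᶜ = a for all a in B. -/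
theorem stmt_16 {B : Type*} (inf sup : B → B → B) (compl : B → B)
    (hsupc : ∀ a b : B, sup a b = sup b a)
    (hinfc : ∀ a b : B, inf a b = inf b a)
    (hsupid : ∀ a b : B, sup a (inf b (compl b)) = a)
    (hinfid : ∀ a b : B, inf a (sup b (compl b)) = a)
    (hinfd : ∀ a b c : B, inf a (sup b c) = sup (inf a b) (inf a c))
    (hsupd : ∀ a b c : B, sup a (inf b c) = inf (sup a b) (sup a c)) :
    ∀ a : B, compl (compl a) = a := by
  -- all zeros are equal
  have h0 : ∀ b c : B, inf b (compl b) = inf c (compl c) := by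
    intro b c
    have h1 := hsupid (inf b (compl b)) c
    have h2 := hsupid (inf c (compl c)) b
    rw [hsupc] at h2
    rw [h2] at h1
    exact h1.symm
  -- all ones are equal
  have h1 : ∀ b c : B, sup b (compl b) = sup c (compl c) := by
    intro b c
    have h3 := hinfid (sup b (compl b)) c
    have h4 := hinfid (sup c (compl c)) b
    rw [hinfc] at h4
    rw [h4] at h3
    exact h3.symm
  -- uniqueness of complements
  have key : ∀ x y z : B, inf x y = inf x (compl x) → sup x y = sup x (compl x) →
      inf x z = inf x (compl x) → sup x z = sup x (compl x) → y = z := by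
    intro x y z hiy hsy hiz hsz
    have hy : y = inf y z := by
      calc y = inf y (sup x (compl x)) := (hinfid y x).symm
        _ = inf y (sup x z) := by rw [hsz]
        _ = sup (inf y x) (inf y z) := hinfd y x z
        _ = sup (inf y z) (inf y x) := hsupc _ _
        _ = sup (inf y z) (inf x y) := by rw [hinfc y x]
        _ = sup (inf y z) (inf x (compl x)) := by rw [hiy]
        _ = inf y z := hsupid _ _
    have hz : z = inf z y := by
      calc z = inf z (sup x (compl x)) := (hinfid z x).symm
        _ = inf z (sup x y) := by rw [hsy]
        _ = sup (inf z x) (inf z y) := hinfd z x y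
        _ = sup (inf z y) (inf z x) := hsupc _ _
        _ = sup (inf z y) (inf x z) := by rw [hinfc z x]
        _ = sup (inf z y) (inf x (compl x)) := by rw [hiz]
        _ = inf z y := hsupid _ _
    rw [hy, hinfc, ← hz]
  intro a
  have ha1 : inf (compl a) a = inf (compl a) (compl (compl a)) := by
    rw [hinfc]; exact h0 a (compl a)
  have ha2 : sup (compl a) a = sup (compl a) (compl (compl a)) := by
    rw [hsupc]; exact h1 a (compl a)
  exact (key (compl a) a (compl (compl a)) ha1 ha2 rfl rfl).symm
end

section
/- If B is a type with binary operations ⊓, ⊔ and a unary operation ᶜ satisfying the six Huntington-style axioms, then the laws of noncontradiction and of the excluded middle hold: aᶜ ⊓ a = bᶜ ⊓ b and aᶜ ⊔ a = bᶜ ⊔ b for all a, b in B. -/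
theorem stmt_17 {B : Type*} (inf sup : B → B → B) (compl : B → B)
    (hsupc : ∀ a b : B, sup a b = sup b a)
    (hinfc : ∀ a b : B, inf a b = inf b a)
    (hsupid : ∀ a b : B, sup a (inf b (compl b)) = a)
    (hinfid : ∀ a b : B, inf a (sup b (compl b)) = a)
    (hinfd : ∀ a b c : B, inf a (sup b c) = sup (inf a b) (inf a c))
    (hsupd : ∀ a b c : B, sup a (inf b c) = inf (sup a b) (sup a c)) :
    ∀ a b : B, inf (compl a) a = inf (compl b) b ∧ sup (compl a) a = sup (compl b) b := by
  intro a b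
  constructor
  · calc inf (compl a) a = inf a (compl a) := hinfc _ _
      _ = sup (inf a (compl a)) (inf b (compl b)) := (hsupid _ _).symm
      _ = sup (inf b (compl b)) (inf a (compl a)) := hsupc _ _
      _ = inf b (compl b) := hsupid _ _
      _ = inf (compl b) b := hinfc _ _
  · calc sup (compl a) a = sup a (compl a) := hsupc _ _
      _ = inf (sup a (compl a)) (sup b (compl b)) := (hinfid _ _).symm
      _ = inf (sup b (compl b)) (sup a (compl a)) := hinfc _ _
      _ = sup b (compl b) := hinfid _ _
      _ = sup (compl b) b := hsupc _ _
end

section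
/- If B is a type with binary operations ⊓, ⊔ and a unary operation ᶜ satisfying the six Huntington-style axioms, then both operations are associative: (a ⊓ b) ⊓ c = a ⊓ (b ⊓ c) and (a ⊔ b) ⊔ c = a ⊔ (b ⊔ c) for all a, b, c in B. -/
theorem stmt_19 {B : Type*} (inf sup : B → B → B) (compl : B → B)
    (hsupc : ∀ a b : B, sup a b = sup b a)
    (hinfc : ∀ a b : B, inf a b = inf b a)
    (hsupid : ∀ a b : B, sup a (inf b (compl b)) = a)
    (hinfid : ∀ a b : B, inf a (sup b (compl b)) = a)
    (hinfd : ∀ a b c : B, inf a (sup b c) = sup (inf a b) (inf a c))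
    (hsupd : ∀ a b c : B, sup a (inf b c) = inf (sup a b) (sup a c)) :
    ∀ a b c : B, inf (inf a b) c = inf a (inf b c) ∧ sup (sup a b) c = sup a (sup b c) := by
  -- zero is left identity for sup, one is left identity for inf
  have h0 : ∀ x b : B, sup (inf b (compl b)) x = x := fun x b => by
    rw [hsupc, hsupid]
  have h1 : ∀ x b : B, inf (sup b (compl b)) x = x := fun x b => by
    rw [hinfc, hinfid]
  -- b ⊓ (b ⊓ bᶜ) = b ⊓ bᶜ
  have hb0 : ∀ b : B, inf b (inf b (compl b)) = inf b (compl b) := fun b => by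
    calc inf b (inf b (compl b))
        = sup (inf b (inf b (compl b))) (inf b (compl b)) := (hsupid _ b).symm
      _ = inf b (sup (inf b (compl b)) (compl b)) := (hinfd b _ _).symm
      _ = inf b (compl b) := by rw [h0]
  -- b ⊔ (b ⊔ bᶜ) = b ⊔ bᶜ
  have hb1 : ∀ b : B, sup b (sup b (compl b)) = sup b (compl b) := fun b => by
    calc sup b (sup b (compl b))
        = inf (sup b (sup b (compl b))) (sup b (compl b)) := (hinfid _ b).symm
      _ = sup b (inf (sup b (compl b)) (compl b)) := (hsupd b _ _).symm
      _ = sup b (compl b) := by rw [h1]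
  -- absorption laws
  have habs1 : ∀ a b : B, inf a (sup a b) = a := fun a b => by
    calc inf a (sup a b)
        = inf (sup a (inf b (compl b))) (sup a b) := by rw [hsupid]
      _ = sup a (inf (inf b (compl b)) b) := (hsupd a _ b).symm
      _ = sup a (inf b (inf b (compl b))) := by rw [hinfc]
      _ = sup a (inf b (compl b)) := by rw [hb0]
      _ = a := hsupid a b
  have habs2 : ∀ a b : B, sup a (inf a b) = a := fun a b => by
    calc sup a (inf a b)
        = sup (inf a (sup b (compl b))) (inf a b) := by rw [hinfid]
      _ = inf a (sup (sup b (compl b)) b) := (hinfd a _ b).symm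
      _ = inf a (sup b (sup b (compl b))) := by rw [hsupc]
      _ = inf a (sup b (compl b)) := by rw [hb1]
      _ = a := hinfid a b
  intro a b c
  constructor
  · -- inf associativity
    have i1 : sup a (inf (inf a b) c) = a := by
      rw [hsupd, habs2, habs1]
    have i2 : sup a (inf a (inf b c)) = a := habs2 a _
    have i3 : sup (compl a) (inf (inf a b) c)
        = inf (sup (compl a) b) (sup (compl a) c) := by
      rw [hsupd, hsupd, hsupc (compl a) a, h1]
    have i4 : sup (compl a) (inf a (inf b c))
        = inf (sup (compl a) b) (sup (compl a) c) := by
      rw [hsupd, hsupc (compl a) a, hsupd, h1]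
    have key : ∀ X : B, X = inf (sup a X) (sup (compl a) X) := fun X => by
      calc X = sup X (inf a (compl a)) := (hsupid X a).symm
        _ = inf (sup X a) (sup X (compl a)) := hsupd X a (compl a)
        _ = inf (sup a X) (sup (compl a) X) := by rw [hsupc X a, hsupc X (compl a)]
    calc inf (inf a b) c
        = inf (sup a (inf (inf a b) c)) (sup (compl a) (inf (inf a b) c)) := key _
      _ = inf a (inf (sup (compl a) b) (sup (compl a) c)) := by rw [i1, i3]
      _ = inf (sup a (inf a (inf b c))) (sup (compl a) (inf a (inf b c))) := by
            rw [i2, i4]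
      _ = inf a (inf b c) := (key _).symm
  · -- sup associativity
    have s1 : inf a (sup (sup a b) c) = a := by
      rw [hinfd, habs1, habs2]
    have s2 : inf a (sup a (sup b c)) = a := habs1 a _
    have s3 : inf (compl a) (sup (sup a b) c)
        = sup (inf (compl a) b) (inf (compl a) c) := by
      rw [hinfd, hinfd, hinfc (compl a) a, h0]
    have s4 : inf (compl a) (sup a (sup b c))
        = sup (inf (compl a) b) (inf (compl a) c) := by
      rw [hinfd, hinfc (compl a) a, hinfd, h0]
    have key : ∀ X : B, X = sup (inf a X) (inf (compl a) X) := fun X => by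
      calc X = inf X (sup a (compl a)) := (hinfid X a).symm
        _ = sup (inf X a) (inf X (compl a)) := hinfd X a (compl a)
        _ = sup (inf a X) (inf (compl a) X) := by rw [hinfc X a, hinfc X (compl a)]
    calc sup (sup a b) c
        = sup (inf a (sup (sup a b) c)) (inf (compl a) (sup (sup a b) c)) := key _
      _ = sup a (sup (inf (compl a) b) (inf (compl a) c)) := by rw [s1, s3]
      _ = sup (inf a (sup a (sup b c))) (inf (compl a) (sup a (sup b c))) := by
            rw [s2, s4]
      _ = sup a (sup b c) := (key _).symm
end
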